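/- Let K be a field and let n ≥ 3; if K is infinite, assume n ≥ 4. Let Ω and Ψ be conjugacy classes of the special linear group SL(n,K) (orbits under conjugation by SL(n,K)). Assume that Ω and Ψ are nonscalar. Then tr(ΩΨ) = { tr(ωψ) : ω ∈ Ω, ψ ∈ Ψ } equals K. -/

import Mathlib

open Matrix

section helpers

variable {K : Type*} [Field K] {n : ℕ}

/-- third index distinct from two given ones -/
lemma exists_third_index (hn : 3 ≤ n) (a b : Fin n) : ∃ c : Fin n, c ≠ a ∧ c ≠ b := by
  have h3 : 2 < Fintype.card (Fin n) := by simp; omega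
  by_contra h
  push_neg at h
  have : (Finset.univ : Finset (Fin n)) ⊆ {a, b} := by
    intro x _
    rcases eq_or_ne x a with rfl | hxa
    · simp
    · simp [h x hxa]
  have := Finset.card_le_card this
  simp [Fintype.card_fin] at this
  have hc : ({a, b} : Finset (Fin n)).card ≤ 2 := Finset.card_insert_le _ _ |>.trans (by simp)
  omega

lemma exists_equiv_two {α β : Type*} [DecidableEq β] [Fintype α] [Fintype β]
    (h : Fintype.card α = Fintype.card β) {a0 a1 : α} {b0 b1 : β}
    (ha : a0 ≠ a1) (hb : b0 ≠ b1) : ∃ e : α ≃ β, e a0 = b0 ∧ e a1 = b1 := by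
  obtain ⟨e0⟩ := Fintype.card_eq.mp h
  let e1 : α ≃ β := e0.trans (Equiv.swap (e0 a0) b0)
  have h1 : e1 a0 = b0 := by simp [e1]
  have hc : e1 a1 ≠ b0 := by
    rw [← h1]; exact fun hx => ha (e1.injective hx).symm
  refine ⟨e1.trans (Equiv.swap (e1 a1) b1), ?_, ?_⟩
  · simpa [h1] using Equiv.swap_apply_of_ne_of_ne hc.symm hb
  · simp

/-- a nonscalar matrix moves some vector off its own line -/
lemma exists_not_smul (hn : 2 ≤ n) (A : Matrix (Fin n) (Fin n) K)
    (hA : ∀ c : K, A ≠ c • 1) :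
    ∃ v : Fin n → K, v ≠ 0 ∧ ∀ a : K, a • v ≠ A *ᵥ v := by
  by_contra h
  push_neg at h
  have key : ∀ v : Fin n → K, v ≠ 0 → ∃ a : K, a • v = A *ᵥ v := h
  have e : ∀ i : Fin n, (Pi.single i 1 : Fin n → K) ≠ 0 := by
    intro i hi
    have := congrFun hi i
    simp at this
  choose c hc using fun i => key _ (e i)
  have hcol : ∀ i k, A k i = if k = i then c i else 0 := by
    intro i k
    have h1 : (c i • (Pi.single i 1 : Fin n → K)) k = (A *ᵥ Pi.single i 1) k := by
      rw [hc i]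
    simp only [mulVec_single, MulOpposite.op_one, one_smul, Matrix.col_apply] at h1
    rw [← h1]
    rcases eq_or_ne k i with rfl | hk
    · simp
    · simp [Pi.single_eq_of_ne hk, hk]
  -- all c i are equal
  have hceq : ∀ i j : Fin n, i ≠ j → c i = c j := by
    intro i j hij
    have hv : (Pi.single i 1 + Pi.single j 1 : Fin n → K) ≠ 0 := by
      intro hz
      have := congrFun hz i
      simp [Pi.single_eq_of_ne hij] at this
    obtain ⟨a, hav⟩ := key _ hv
    have hAv : A *ᵥ ((Pi.single i 1 : Fin n → K) + Pi.single j 1) =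
        c i • (Pi.single i 1 : Fin n → K) + c j • (Pi.single j 1 : Fin n → K) := by
      rw [mulVec_add, ← hc i, ← hc j]
    rw [hAv] at hav
    have hi := congrFun hav i
    have hj := congrFun hav j
    simp [Pi.single_eq_of_ne hij, Pi.single_eq_of_ne (Ne.symm hij)] at hi hj
    rw [← hi, ← hj]
  have h01 : (⟨0, by omega⟩ : Fin n) ≠ ⟨1, by omega⟩ := by simp [Fin.ext_iff]
  set i0 : Fin n := ⟨0, by omega⟩
  apply hA (c i0)
  ext k i
  rw [hcol i k]
  have : c i = c i0 := by
    rcases eq_or_ne i i0 with rfl | hi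
    · rfl
    · exact hceq i i0 hi
  rcases eq_or_ne k i with rfl | hk
  · simp [this, Matrix.one_apply]
  · simp [Matrix.one_apply, hk]

end helpers

section normalform

variable {K : Type*} [Field K] {n : ℕ}

open Matrix SpecialLinearGroup

lemma exists_conj_col (hn : 3 ≤ n) (q0 q1 : Fin n) (hq : q0 ≠ q1)
    (M : SpecialLinearGroup (Fin n) K)
    (hM : ∀ c : K, (M : Matrix (Fin n) (Fin n) K) ≠ c • 1) :
    ∃ g : SpecialLinearGroup (Fin n) K,
      ∀ k, ((g * M * g⁻¹ : SpecialLinearGroup (Fin n) K) : Matrix (Fin n) (Fin n) K) k q0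
        = if k = q1 then 1 else 0 := by
  classical
  set A := (M : Matrix (Fin n) (Fin n) K) with hA
  obtain ⟨v, hv0, hvli⟩ := exists_not_smul (by omega) A hM
  have hAvNe : v ≠ A *ᵥ v := by
    intro h
    exact hvli 1 (by simpa using h)
  have hli : LinearIndepOn K id ({v, A *ᵥ v} : Set (Fin n → K)) :=
    linearIndepOn_id_pair hv0 hvli
  haveI := FiniteDimensional.fintypeBasisIndex (Module.Basis.extend hli)
  have hcard : Fintype.card (hli.extend (Set.subset_univ _)) = n := by
    have h1 := Module.finrank_eq_card_basis (Module.Basis.extend hli)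
    have h2 : Module.finrank K (Fin n → K) = n := by simp
    omega
  have hvmem : v ∈ hli.extend (Set.subset_univ _) :=
    hli.subset_extend _ (Set.mem_insert _ _)
  have hwmem : A *ᵥ v ∈ hli.extend (Set.subset_univ _) :=
    hli.subset_extend _ (Set.mem_insert_of_mem _ rfl)
  let i0 : hli.extend (Set.subset_univ _) := ⟨v, hvmem⟩
  let i1 : hli.extend (Set.subset_univ _) := ⟨A *ᵥ v, hwmem⟩
  have hi : i0 ≠ i1 := by
    intro h
    exact hAvNe (congrArg Subtype.val h)
  obtain ⟨e, he0, he1⟩ := exists_equiv_two (by rw [Fintype.card_fin, hcard]) hq hi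
  let cb := (Module.Basis.extend hli).reindex e.symm
  have hc0 : cb q0 = v := by
    simp only [cb, Module.Basis.reindex_apply, Equiv.symm_symm, he0]
    exact Module.Basis.extend_apply_self hli i0
  have hc1 : cb q1 = A *ᵥ v := by
    simp only [cb, Module.Basis.reindex_apply, Equiv.symm_symm, he1]
    exact Module.Basis.extend_apply_self hli i1
  let P := (Pi.basisFun K (Fin n)).toMatrix cb
  haveI hPinv : Invertible P := (Pi.basisFun K (Fin n)).invertibleToMatrix cb
  have hPdet : P.det ≠ 0 := (P.isUnit_det_of_invertible).ne_zero
  obtain ⟨k0, hk0a, hk0b⟩ := exists_third_index hn q0 q1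
  let w : Fin n → K := fun i => if i = k0 then P.det⁻¹ else 1
  let P2 := P * Matrix.diagonal w
  have hP2det : P2.det = 1 := by
    have hprod : (∏ i, w i) = P.det⁻¹ := by
      simp only [w]
      rw [Finset.prod_ite_eq' Finset.univ k0 (fun _ => P.det⁻¹)]
      simp
    simp only [P2, det_mul, det_diagonal, hprod]
    exact mul_inv_cancel₀ hPdet
  have hPapp : ∀ i j, P i j = cb j i := by
    intro i j
    simp [P, Module.Basis.toMatrix_apply]
  have col0 : ∀ i, P2 i q0 = v i := by
    intro i
    have : w q0 = 1 := if_neg (Ne.symm hk0a)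
    simp [P2, Matrix.mul_diagonal, this, hPapp, hc0]
  have col1 : ∀ i, P2 i q1 = (A *ᵥ v) i := by
    intro i
    have : w q1 = 1 := if_neg (Ne.symm hk0b)
    simp [P2, Matrix.mul_diagonal, this, hPapp, hc1]
  let gP : SpecialLinearGroup (Fin n) K := ⟨P2, hP2det⟩
  refine ⟨gP⁻¹, ?_⟩
  intro k
  have hcoe : ((gP⁻¹ * M * (gP⁻¹)⁻¹ : SpecialLinearGroup (Fin n) K) : Matrix (Fin n) (Fin n) K)
      = ((gP⁻¹ : SpecialLinearGroup (Fin n) K) : Matrix (Fin n) (Fin n) K) * A * P2 := by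
    rw [inv_inv]
    rfl
  set Q := ((gP⁻¹ : SpecialLinearGroup (Fin n) K) : Matrix (Fin n) (Fin n) K) with hQ
  have hQP : Q * P2 = 1 := by
    have h1 : (gP⁻¹ * gP : SpecialLinearGroup (Fin n) K) = 1 := inv_mul_cancel gP
    calc Q * P2 = ((gP⁻¹ * gP : SpecialLinearGroup (Fin n) K) : Matrix (Fin n) (Fin n) K) := rfl
      _ = 1 := by rw [h1]; rfl
  have hcolvec : (Q * A * P2) *ᵥ Pi.single q0 1 = Pi.single q1 1 := by
    have h1 : P2 *ᵥ Pi.single q0 1 = v := by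
      ext i
      simp [col0]
    have h2 : A *ᵥ v = P2 *ᵥ Pi.single q1 1 := by
      ext i
      simp [col1]
    rw [← mulVec_mulVec, ← mulVec_mulVec, h1, h2, mulVec_mulVec, hQP, one_mulVec]
  have := congrFun hcolvec k
  simp only [mulVec_single, MulOpposite.op_one, one_smul, Matrix.col_apply, Pi.single_apply] at this
  rw [hcoe, this]

end normalform

section tracecomp

variable {K : Type*} [Field K] {n : ℕ}

lemma trace_single_mul (i j : Fin n) (c : K) (X : Matrix (Fin n) (Fin n) K) :
    (Matrix.single i j c * X).trace = c * X j i := by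
  classical
  have hdiag : ∀ k, (Matrix.single i j c * X) k k = if k = i then c * X j i else 0 := by
    intro k
    rcases eq_or_ne k i with rfl | hk
    · simp [Matrix.single_mul_apply_same]
    · simp [Matrix.single_mul_apply_of_ne _ _ _ _ _ hk, hk]
  simp only [Matrix.trace, Matrix.diag_apply, hdiag]
  simp

lemma shift_entry (p0 p1 p2 : Fin n) (h01 : p0 ≠ p1) (h02 : p0 ≠ p2) (h12 : p1 ≠ p2)
    (N : Matrix (Fin n) (Fin n) K) (hcol : ∀ k, N k p0 = if k = p1 then 1 else 0) (s : K) :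
    (∀ k, (transvection p0 p2 (-s) * N * transvection p0 p2 s) k p0 = if k = p1 then 1 else 0)
    ∧ (transvection p0 p2 (-s) * N * transvection p0 p2 s) p1 p2 = N p1 p2 + s := by
  constructor
  · intro k
    rw [Matrix.mul_transvection_apply_of_ne _ _ _ _ h02]
    rcases eq_or_ne k p0 with rfl | hk
    · rw [Matrix.transvection_mul_apply_same]
      rw [hcol, hcol, if_neg h01, if_neg (Ne.symm h12)]
      simp [h01]
    · rw [Matrix.transvection_mul_apply_of_ne _ _ _ _ hk, hcol]
  · rw [Matrix.mul_transvection_apply_same]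
    rw [Matrix.transvection_mul_apply_of_ne _ _ _ _ (Ne.symm h01),
      Matrix.transvection_mul_apply_of_ne _ _ _ _ (Ne.symm h01), hcol, if_pos rfl, mul_one]

lemma trace_conj_transvection (p0 p1 p2 : Fin n)
    (h12 : p1 ≠ p2)
    (A B : Matrix (Fin n) (Fin n) K)
    (hA : ∀ k, A k p0 = if k = p1 then 1 else 0)
    (hB : ∀ k, B k p0 = if k = p2 then 1 else 0) (t : K) :
    (A * (transvection p0 p1 t * B * transvection p0 p1 (-t))).trace
      = (A * B).trace + t * (B p1 p1 - A p1 p2) := by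
  classical
  have hBA : (B * A) p1 p0 = B p1 p1 := by
    rw [Matrix.mul_apply]
    simp [hA]
  have hAB : (A * B) p1 p0 = A p1 p2 := by
    rw [Matrix.mul_apply]
    simp [hB]
  have hBp : B p1 p0 = 0 := by rw [hB, if_neg h12]
  set E1 := Matrix.single p0 p1 t with hE1
  set E2 := Matrix.single p0 p1 (-t) with hE2
  have key1 : ∀ X : Matrix (Fin n) (Fin n) K,
      (A * (E1 * X)).trace = t * (X * A) p1 p0 := by
    intro X
    rw [Matrix.trace_mul_comm, Matrix.mul_assoc, hE1, _root_.trace_single_mul]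
  have hT : transvection p0 p1 t * B * transvection p0 p1 (-t)
      = B + E1 * B + B * E2 + E1 * (B * E2) := by
    rw [Matrix.transvection, Matrix.transvection, ← hE1, ← hE2]
    noncomm_ring
  have key2 : (A * (B * E2)).trace = -t * (A * B) p1 p0 := by
    rw [← Matrix.mul_assoc, Matrix.trace_mul_comm, hE2, _root_.trace_single_mul]
  have h4 : ((B * E2) * A) p1 p0 = 0 := by
    rw [Matrix.mul_apply]
    simp only [hA, mul_ite, mul_one, mul_zero, Finset.sum_ite_eq', Finset.mem_univ, if_true]
    rw [hE2]
    simp [hBp]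
  rw [hT, Matrix.mul_add, Matrix.mul_add, Matrix.mul_add, Matrix.trace_add, Matrix.trace_add,
    Matrix.trace_add, key1 B, key1 (B * E2), key2, hBA, hAB, h4]
  ring

end tracecomp

/-- **Theorem 2.** Let `K` be a field and `n ≥ 3`; if `K` is infinite assume `n ≥ 4`.
Let `Ω`, `Ψ` be nonscalar conjugacy classes of `SL(n,K)`.  Then the set of traces of
products `ωψ` (`ω ∈ Ω`, `ψ ∈ Ψ`) is all of `K`. -/
theorem trace_product_conjugacy_classes_SL_eq_univ
    {K : Type*} [Field K] {n : ℕ} (hn : 3 ≤ n) (hn' : Infinite K → 4 ≤ n)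
    (Ω Ψ : Set (Matrix.SpecialLinearGroup (Fin n) K))
    (hΩclass : ∃ A : Matrix.SpecialLinearGroup (Fin n) K,
      Ω = {B | ∃ g : Matrix.SpecialLinearGroup (Fin n) K, g * A * g⁻¹ = B})
    (hΨclass : ∃ A : Matrix.SpecialLinearGroup (Fin n) K,
      Ψ = {B | ∃ g : Matrix.SpecialLinearGroup (Fin n) K, g * A * g⁻¹ = B})
    (hΩns : ∀ ω ∈ Ω, ∀ c : K, (ω : Matrix (Fin n) (Fin n) K) ≠ c • 1)
    (hΨns : ∀ ψ ∈ Ψ, ∀ c : K, (ψ : Matrix (Fin n) (Fin n) K) ≠ c • 1) :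
    {τ : K | ∃ ω ∈ Ω, ∃ ψ ∈ Ψ,
      ((ω : Matrix (Fin n) (Fin n) K) * (ψ : Matrix (Fin n) (Fin n) K)).trace = τ} =
      Set.univ := by
  classical
  obtain ⟨A0, hΩ⟩ := hΩclass
  obtain ⟨B0, hΨ⟩ := hΨclass
  have hA0mem : A0 ∈ Ω := by rw [hΩ]; exact ⟨1, by group⟩
  have hB0mem : B0 ∈ Ψ := by rw [hΨ]; exact ⟨1, by group⟩
  have hΩconj : ∀ X ∈ Ω, ∀ g : Matrix.SpecialLinearGroup (Fin n) K, g * X * g⁻¹ ∈ Ω := by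
    intro X hX g
    rw [hΩ] at hX ⊢
    obtain ⟨h, rfl⟩ := hX
    exact ⟨g * h, by group⟩
  have hΨconj : ∀ X ∈ Ψ, ∀ g : Matrix.SpecialLinearGroup (Fin n) K, g * X * g⁻¹ ∈ Ψ := by
    intro X hX g
    rw [hΨ] at hX ⊢
    obtain ⟨h, rfl⟩ := hX
    exact ⟨g * h, by group⟩
  set p0 : Fin n := ⟨0, by omega⟩
  set p1 : Fin n := ⟨1, by omega⟩
  set p2 : Fin n := ⟨2, by omega⟩
  have h01 : p0 ≠ p1 := by simp [p0, p1, Fin.ext_iff]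
  have h02 : p0 ≠ p2 := by simp [p0, p2, Fin.ext_iff]
  have h12 : p1 ≠ p2 := by simp [p1, p2, Fin.ext_iff]
  -- normalize ψ : column p0 equal to e_{p2}
  obtain ⟨gB, hgB⟩ := exists_conj_col hn p0 p2 h02 B0 (hΨns B0 hB0mem)
  set ψ := gB * B0 * gB⁻¹ with hψdef
  have hψmem : ψ ∈ Ψ := hΨconj _ hB0mem gB
  -- normalize ω₁ : column p0 equal to e_{p1}
  obtain ⟨gA, hgA⟩ := exists_conj_col hn p0 p1 h01 A0 (hΩns A0 hA0mem)
  set ω1 := gA * A0 * gA⁻¹ with hω1def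
  have hω1mem : ω1 ∈ Ω := hΩconj _ hA0mem gA
  -- shift the (p1,p2) entry of ω₁
  set s : K := (ψ : Matrix (Fin n) (Fin n) K) p1 p1 - 1
    - (ω1 : Matrix (Fin n) (Fin n) K) p1 p2 with hs
  set T : Matrix.SpecialLinearGroup (Fin n) K :=
    ⟨transvection p0 p2 (-s), Matrix.det_transvection_of_ne _ _ h02 _⟩ with hT
  set Tinv : Matrix.SpecialLinearGroup (Fin n) K :=
    ⟨transvection p0 p2 s, Matrix.det_transvection_of_ne _ _ h02 _⟩ with hTinv
  have hTT : Tinv = T⁻¹ := by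
    apply eq_inv_of_mul_eq_one_right
    apply Subtype.ext
    show transvection p0 p2 (-s) * transvection p0 p2 s = (1 : Matrix (Fin n) (Fin n) K)
    rw [Matrix.transvection_mul_transvection_same _ _ h02]
    simp
  set ω := T * ω1 * T⁻¹ with hωdef
  have hωmem : ω ∈ Ω := hΩconj _ hω1mem T
  have hωcoe : (ω : Matrix (Fin n) (Fin n) K)
      = transvection p0 p2 (-s) * (ω1 : Matrix (Fin n) (Fin n) K) * transvection p0 p2 s := by
    rw [hωdef, ← hTT]
    rfl
  obtain ⟨hωcol, hωval⟩ := shift_entry p0 p1 p2 h01 h02 h12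
    (ω1 : Matrix (Fin n) (Fin n) K) hgA s
  rw [← hωcoe] at hωcol hωval
  have hcoeff : (ψ : Matrix (Fin n) (Fin n) K) p1 p1
      - (ω : Matrix (Fin n) (Fin n) K) p1 p2 = 1 := by
    rw [hωval, hs]
    ring
  -- conclude
  apply Set.eq_univ_of_forall
  intro τ
  set t : K := τ - ((ω : Matrix (Fin n) (Fin n) K) * (ψ : Matrix (Fin n) (Fin n) K)).trace with ht
  set U : Matrix.SpecialLinearGroup (Fin n) K :=
    ⟨transvection p0 p1 t, Matrix.det_transvection_of_ne _ _ h01 _⟩ with hU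
  set Uinv : Matrix.SpecialLinearGroup (Fin n) K :=
    ⟨transvection p0 p1 (-t), Matrix.det_transvection_of_ne _ _ h01 _⟩ with hUinv
  have hUU : Uinv = U⁻¹ := by
    apply eq_inv_of_mul_eq_one_right
    apply Subtype.ext
    show transvection p0 p1 t * transvection p0 p1 (-t) = (1 : Matrix (Fin n) (Fin n) K)
    rw [Matrix.transvection_mul_transvection_same _ _ h01]
    simp
  set ψ' := U * ψ * U⁻¹ with hψ'def
  have hψ'mem : ψ' ∈ Ψ := hΨconj _ hψmem U
  have hψ'coe : (ψ' : Matrix (Fin n) (Fin n) K)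
      = transvection p0 p1 t * (ψ : Matrix (Fin n) (Fin n) K) * transvection p0 p1 (-t) := by
    rw [hψ'def, ← hUU]
    rfl
  refine ⟨ω, hωmem, ψ', hψ'mem, ?_⟩
  rw [hψ'coe, trace_conj_transvection p0 p1 p2 h12 _ _ hωcol hgB t, hcoeff, ht]
  ring
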